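/- For the Lie algebra g_ω and the general 15-parameter antisymmetric element r with cocommutator δ(X) := (ad_X⊗id + id⊗ad_X)(r), the coisotropy condition δ(J), δ(K₁), δ(K₂) ∈ h⊗g_ω + g_ω⊗h (where h = span{J,K₁,K₂}) holds if and only if a₃ = b₃ = c₃ = 0. This characterisation holds for every value of the parameter ω. -/

import Mathlib

open TensorProduct

/-- `x ∧ y = x ⊗ y − y ⊗ x`. -/
noncomputable def wedge {g : Type*} [AddCommGroup g] [Module ℝ g] (x y : g) :
    TensorProduct ℝ g g := x ⊗ₜ[ℝ] y - y ⊗ₜ[ℝ] x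

lemma aux_phi_tmul {g : Type*} [AddCommGroup g] [Module ℝ g] (fi fj : g →ₗ[ℝ] ℝ) (x y : g) :
    TensorProduct.lift ((LinearMap.mul ℝ ℝ).compl₁₂ fi fj) (x ⊗ₜ[ℝ] y) = fi x * fj y := by
  simp [TensorProduct.lift.tmul, LinearMap.compl₁₂_apply, LinearMap.mul_apply']

lemma aux_zero_left {g : Type*} [AddCommGroup g] [Module ℝ g] (h' : Submodule ℝ g)
    (fi fj : g →ₗ[ℝ] ℝ) (hi : h' ≤ LinearMap.ker fi) (s : TensorProduct ℝ h' g) :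
    TensorProduct.lift ((LinearMap.mul ℝ ℝ).compl₁₂ fi fj)
      (TensorProduct.map h'.subtype (LinearMap.id : g →ₗ[ℝ] g) s) = 0 := by
  induction s using TensorProduct.induction_on with
  | zero => simp
  | tmul u v =>
    rw [TensorProduct.map_tmul, aux_phi_tmul]
    have : fi u.1 = 0 := hi u.2
    simp [this]
  | add s t hs ht => rw [map_add, map_add, hs, ht, add_zero]

lemma aux_zero_right {g : Type*} [AddCommGroup g] [Module ℝ g] (h' : Submodule ℝ g)
    (fi fj : g →ₗ[ℝ] ℝ) (hj : h' ≤ LinearMap.ker fj) (s : TensorProduct ℝ g h') :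
    TensorProduct.lift ((LinearMap.mul ℝ ℝ).compl₁₂ fi fj)
      (TensorProduct.map (LinearMap.id : g →ₗ[ℝ] g) h'.subtype s) = 0 := by
  induction s using TensorProduct.induction_on with
  | zero => simp
  | tmul u v =>
    rw [TensorProduct.map_tmul, aux_phi_tmul]
    have : fj v.1 = 0 := hj v.2
    simp [this]
  | add s t hs ht => rw [map_add, map_add, hs, ht, add_zero]

lemma aux_vanish {g : Type*} [AddCommGroup g] [Module ℝ g] (h' : Submodule ℝ g)
    (fi fj : g →ₗ[ℝ] ℝ) (hi : h' ≤ LinearMap.ker fi) (hj : h' ≤ LinearMap.ker fj)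
    (t : TensorProduct ℝ g g)
    (ht : t ∈ LinearMap.range (TensorProduct.map h'.subtype (LinearMap.id : g →ₗ[ℝ] g)) ⊔
          LinearMap.range (TensorProduct.map (LinearMap.id : g →ₗ[ℝ] g) h'.subtype)) :
    TensorProduct.lift ((LinearMap.mul ℝ ℝ).compl₁₂ fi fj) t = 0 := by
  rcases Submodule.mem_sup.mp ht with ⟨u, ⟨s, rfl⟩, w, ⟨s', rfl⟩, rfl⟩
  rw [map_add, aux_zero_left h' fi fj hi, aux_zero_right h' fi fj hj, add_zero]

lemma aux_expand {g : Type*} [LieRing g] [LieAlgebra ℝ g] (X x y : g) :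
    (TensorProduct.map (LieAlgebra.ad ℝ g X : g →ₗ[ℝ] g) (LinearMap.id : g →ₗ[ℝ] g)
      + TensorProduct.map (LinearMap.id : g →ₗ[ℝ] g) (LieAlgebra.ad ℝ g X : g →ₗ[ℝ] g))
      (wedge x y)
    = ⁅X,x⁆ ⊗ₜ[ℝ] y - y ⊗ₜ[ℝ] ⁅X,x⁆ + (x ⊗ₜ[ℝ] ⁅X,y⁆ - ⁅X,y⁆ ⊗ₜ[ℝ] x) := by
  simp only [wedge, LinearMap.add_apply, map_sub, TensorProduct.map_tmul,
    LinearMap.id_coe, id_eq, LieAlgebra.ad_apply]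
  abel

set_option maxHeartbeats 1600000 in
theorem coisotropy_condition_g_omega
    (ω : ℝ) (g : Type*) [LieRing g] [LieAlgebra ℝ g]
    (J P0 P1 P2 K1 K2 : g)
    (hind : LinearIndependent ℝ ![J, P0, P1, P2, K1, K2])
    (hspan : Submodule.span ℝ (Set.range ![J, P0, P1, P2, K1, K2]) = ⊤)
    (hJP1 : ⁅J, P1⁆ = P2) (hJP2 : ⁅J, P2⁆ = -P1)
    (hJK1 : ⁅J, K1⁆ = K2) (hJK2 : ⁅J, K2⁆ = -K1) (hJP0 : ⁅J, P0⁆ = 0)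
    (hP1K1 : ⁅P1, K1⁆ = -P0) (hP2K2 : ⁅P2, K2⁆ = -P0)
    (hP1K2 : ⁅P1, K2⁆ = 0) (hP2K1 : ⁅P2, K1⁆ = 0)
    (hP0K1 : ⁅P0, K1⁆ = -P1) (hP0K2 : ⁅P0, K2⁆ = -P2)
    (hK1K2 : ⁅K1, K2⁆ = -J)
    (hP0P1 : ⁅P0, P1⁆ = ω • K1) (hP0P2 : ⁅P0, P2⁆ = ω • K2)
    (hP1P2 : ⁅P1, P2⁆ = -(ω • J))
    (a1 a2 a3 a4 a5 a6 b1 b2 b3 b4 b5 b6 c1 c2 c3 : ℝ)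
    (r : TensorProduct ℝ g g)
    (hr : r = a1 • wedge J P1 + a2 • wedge J K1 + a3 • wedge P0 P1 + a4 • wedge P0 K1
      + a5 • wedge P1 K1 + a6 • wedge P1 K2 + b1 • wedge J P2 + b2 • wedge J K2
      + b3 • wedge P0 P2 + b4 • wedge P0 K2 + b5 • wedge P2 K2 + b6 • wedge P2 K1
      + c1 • wedge J P0 + c2 • wedge K1 K2 + c3 • wedge P1 P2)
    (δ : g → TensorProduct ℝ g g)
    (hδ : ∀ X : g, δ X =
      (TensorProduct.map (LieAlgebra.ad ℝ g X : g →ₗ[ℝ] g) (LinearMap.id : g →ₗ[ℝ] g)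
        + TensorProduct.map (LinearMap.id : g →ₗ[ℝ] g)
            (LieAlgebra.ad ℝ g X : g →ₗ[ℝ] g)) r) :
    let h : Submodule ℝ g := Submodule.span ℝ {J, K1, K2}
    let hg : Submodule ℝ (TensorProduct ℝ g g) :=
      LinearMap.range (TensorProduct.map h.subtype (LinearMap.id : g →ₗ[ℝ] g))
    let gh : Submodule ℝ (TensorProduct ℝ g g) :=
      LinearMap.range (TensorProduct.map (LinearMap.id : g →ₗ[ℝ] g) h.subtype)
    ((δ J ∈ hg ⊔ gh ∧ δ K1 ∈ hg ⊔ gh ∧ δ K2 ∈ hg ⊔ gh) ↔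
      (a3 = 0 ∧ b3 = 0 ∧ c3 = 0)) := by
  intro h hg gh
  have hK1J : ⁅K1, J⁆ = -K2 := by rw [← lie_skew, hJK1]
  have hK1P0 : ⁅K1, P0⁆ = P1 := by rw [← lie_skew, hP0K1, neg_neg]
  have hK1P1 : ⁅K1, P1⁆ = P0 := by rw [← lie_skew, hP1K1, neg_neg]
  have hK1P2 : ⁅K1, P2⁆ = 0 := by rw [← lie_skew, hP2K1, neg_zero]
  have hK2J : ⁅K2, J⁆ = K1 := by rw [← lie_skew, hJK2, neg_neg]
  have hK2P0 : ⁅K2, P0⁆ = P2 := by rw [← lie_skew, hP0K2, neg_neg]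
  have hK2P1 : ⁅K2, P1⁆ = 0 := by rw [← lie_skew, hP1K2, neg_zero]
  have hK2P2 : ⁅K2, P2⁆ = P0 := by rw [← lie_skew, hP2K2, neg_neg]
  have hK2K1 : ⁅K2, K1⁆ = J := by rw [← lie_skew, hK1K2, neg_neg]
  constructor
  · rintro ⟨hdJ, hdK1, hdK2⟩
    have htop : ⊤ ≤ Submodule.span ℝ (Set.range ![J, P0, P1, P2, K1, K2]) := hspan.ge
    set f : Fin 6 → (g →ₗ[ℝ] ℝ) := fun i => (Module.Basis.mk hind htop).coord i with hfdef
    have hfv : ∀ i k : Fin 6, f i (![J, P0, P1, P2, K1, K2] k) = if k = i then 1 else 0 := by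
      intro i k
      rw [hfdef, ← Module.Basis.mk_apply hind htop, Module.Basis.coord_apply, Module.Basis.repr_self]
      simp [Finsupp.single_apply]
    have f1J : f 1 J = 0 := by simpa using hfv 1 0
    have f1P0 : f 1 P0 = 1 := by simpa using hfv 1 1
    have f1P1 : f 1 P1 = 0 := by simpa using hfv 1 2
    have f1P2 : f 1 P2 = 0 := by simpa using hfv 1 3
    have f1K1 : f 1 K1 = 0 := by simpa using hfv 1 4
    have f1K2 : f 1 K2 = 0 := by simpa using hfv 1 5
    have f2J : f 2 J = 0 := by simpa using hfv 2 0
    have f2P0 : f 2 P0 = 0 := by simpa using hfv 2 1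
    have f2P1 : f 2 P1 = 1 := by simpa using hfv 2 2
    have f2P2 : f 2 P2 = 0 := by simpa using hfv 2 3
    have f2K1 : f 2 K1 = 0 := by simpa using hfv 2 4
    have f2K2 : f 2 K2 = 0 := by simpa using hfv 2 5
    have f3J : f 3 J = 0 := by simpa using hfv 3 0
    have f3P0 : f 3 P0 = 0 := by simpa using hfv 3 1
    have f3P1 : f 3 P1 = 0 := by simpa using hfv 3 2
    have f3P2 : f 3 P2 = 1 := by simpa using hfv 3 3
    have f3K1 : f 3 K1 = 0 := by simpa using hfv 3 4
    have f3K2 : f 3 K2 = 0 := by simpa using hfv 3 5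
    have hker1 : h ≤ LinearMap.ker (f 1) := by
      refine Submodule.span_le.mpr ?_
      rintro x (rfl | rfl | rfl) <;> simp [LinearMap.mem_ker, f1J, f1K1, f1K2]
    have hker2 : h ≤ LinearMap.ker (f 2) := by
      refine Submodule.span_le.mpr ?_
      rintro x (rfl | rfl | rfl) <;> simp [LinearMap.mem_ker, f2J, f2K1, f2K2]
    have hker3 : h ≤ LinearMap.ker (f 3) := by
      refine Submodule.span_le.mpr ?_
      rintro x (rfl | rfl | rfl) <;> simp [LinearMap.mem_ker, f3J, f3K1, f3K2]
    have eJ : TensorProduct.lift ((LinearMap.mul ℝ ℝ).compl₁₂ (f 1) (f 3)) (δ J) = a3 := by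
      rw [hδ, hr]
      simp only [map_add, map_smul, aux_expand, hJP1, hJP2, hJK1, hJK2, hJP0, lie_self,
        zero_tmul, tmul_zero, sub_zero, zero_sub, map_sub, map_neg, map_zero, aux_phi_tmul,
        mul_zero, zero_mul,
        LinearMap.map_neg,
        f1J, f1P0, f1P1, f1P2, f1K1, f1K2, f3J, f3P0, f3P1, f3P2, f3K1, f3K2,
        smul_eq_mul]
      ring
    have eK1b : TensorProduct.lift ((LinearMap.mul ℝ ℝ).compl₁₂ (f 2) (f 3)) (δ K1) = b3 := by
      rw [hδ, hr]
      simp only [map_add, map_smul, aux_expand, hK1J, hK1P0, hK1P1, hK1P2, hK1K2, lie_self,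
        zero_tmul, tmul_zero, sub_zero, zero_sub, map_sub, map_neg, map_zero, aux_phi_tmul,
        mul_zero, zero_mul,
        LinearMap.map_neg,
        f2J, f2P0, f2P1, f2P2, f2K1, f2K2, f3J, f3P0, f3P1, f3P2, f3K1, f3K2,
        smul_eq_mul]
      ring
    have eK1c : TensorProduct.lift ((LinearMap.mul ℝ ℝ).compl₁₂ (f 1) (f 3)) (δ K1) = c3 := by
      rw [hδ, hr]
      simp only [map_add, map_smul, aux_expand, hK1J, hK1P0, hK1P1, hK1P2, hK1K2, lie_self,
        zero_tmul, tmul_zero, sub_zero, zero_sub, map_sub, map_neg, map_zero, aux_phi_tmul,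
        mul_zero, zero_mul,
        LinearMap.map_neg,
        f1J, f1P0, f1P1, f1P2, f1K1, f1K2, f3J, f3P0, f3P1, f3P2, f3K1, f3K2,
        smul_eq_mul]
      ring
    exact ⟨eJ.symm.trans (aux_vanish _ _ _ hker1 hker3 _ hdJ),
      eK1b.symm.trans (aux_vanish _ _ _ hker2 hker3 _ hdK1),
      eK1c.symm.trans (aux_vanish _ _ _ hker1 hker3 _ hdK1)⟩
  · rintro ⟨rfl, rfl, rfl⟩
    have hJh : J ∈ h := Submodule.subset_span (by simp)
    have hK1h : K1 ∈ h := Submodule.subset_span (by simp)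
    have hK2h : K2 ∈ h := Submodule.subset_span (by simp)
    have mem_hg : ∀ (u v : g), u ∈ h → u ⊗ₜ[ℝ] v ∈ hg ⊔ gh := fun u v hu =>
      Submodule.mem_sup_left ⟨(⟨u, hu⟩ : h) ⊗ₜ[ℝ] v, by simp [TensorProduct.map_tmul]⟩
    have mem_gh : ∀ (u v : g), v ∈ h → u ⊗ₜ[ℝ] v ∈ hg ⊔ gh := fun u v hv =>
      Submodule.mem_sup_right ⟨u ⊗ₜ[ℝ] (⟨v, hv⟩ : h), by simp [TensorProduct.map_tmul]⟩
    refine ⟨?_, ?_, ?_⟩ <;>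
    · rw [hδ, hr]
      simp only [zero_smul, add_zero, zero_add, map_add, map_smul, aux_expand,
        hJP1, hJP2, hJK1, hJK2, hJP0,
        hK1J, hK1P0, hK1P1, hK1P2, hK1K2,
        hK2J, hK2P0, hK2P1, hK2P2, hK2K1, lie_self,
        zero_tmul, tmul_zero, neg_tmul, tmul_neg, sub_zero, zero_sub, add_zero, zero_add,
        sub_neg_eq_add, neg_neg]
      repeat
        first
        | apply Submodule.add_mem
        | apply Submodule.sub_mem
        | apply Submodule.smul_mem
        | apply Submodule.neg_mem
        | exact Submodule.zero_mem _
        | exact mem_hg _ _ hJh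
        | exact mem_hg _ _ hK1h
        | exact mem_hg _ _ hK2h
        | exact mem_gh _ _ hJh
        | exact mem_gh _ _ hK1h
        | exact mem_gh _ _ hK2h
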